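/- Under the hypotheses of the cylinder concatenation lemma, if [h₁,v₁] has cycle type (k₁+1, ..., kₙ+1) and [h₂,v₂] has cycle type (l₁+1, ..., l_m+1), then [h,v] (with h = (a₁,b₁)h₁h₂ and v = v₁v₂(a₁,b₁)) has cycle type (k₁+1, ..., kₙ+1, l₁+1, ..., l_m+1). -/

import Mathlib

open Equiv Equiv.Perm

/-- Under the hypotheses of the cylinder concatenation lemma, if `[h₁,v₁]` has
cycle type `(k₁+1, …, kₙ+1)` and `[h₂,v₂]` has cycle type `(l₁+1, …, l_m+1)`,
then `[h,v]`, with `h = (a₁,b₁)h₁h₂` and `v = v₁v₂(a₁,b₁)`, has cycle type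
`(k₁+1, …, kₙ+1, l₁+1, …, l_m+1)`. -/
theorem stmt_5 {α : Type*} [Fintype α] [DecidableEq α]
    (h₁ v₁ h₂ v₂ : Equiv.Perm α) (A B : Finset α) (a₁ a₂ b₁ b₂ : α)
    {n m : ℕ} (k : Fin n → ℕ) (l : Fin m → ℕ)
    (hAB : Disjoint A B)
    (hh₁ : h₁.IsCycle) (hh₁s : h₁.support = A)
    (hv₁ : v₁.IsCycle) (hv₁s : v₁.support = A)
    (hh₂ : h₂.IsCycle) (hh₂s : h₂.support = B)
    (hv₂ : v₂.IsCycle) (hv₂s : v₂.support = B)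
    (ha₁ : a₁ ∈ A) (hb₁ : b₁ ∈ B)
    (ha12 : h₁ a₁ = a₂) (hb12 : h₂ b₁ = b₂)
    (hane : a₁ ≠ a₂) (hbne : b₁ ≠ b₂)
    (hv₁n : v₁⁻¹ a₁ = a₂) (hv₂n : v₂⁻¹ b₁ = b₂)
    (hc₁ : (h₁ * v₁ * h₁⁻¹ * v₁⁻¹).cycleType =
      Multiset.map (fun i => k i + 1) (Finset.univ : Finset (Fin n)).val)
    (hc₂ : (h₂ * v₂ * h₂⁻¹ * v₂⁻¹).cycleType =
      Multiset.map (fun j => l j + 1) (Finset.univ : Finset (Fin m)).val) :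
    ∀ h v : Equiv.Perm α,
      h = Equiv.swap a₁ b₁ * h₁ * h₂ →
      v = v₁ * v₂ * Equiv.swap a₁ b₁ →
      (h * v * h⁻¹ * v⁻¹).cycleType =
        Multiset.map (fun i => k i + 1) (Finset.univ : Finset (Fin n)).val +
          Multiset.map (fun j => l j + 1) (Finset.univ : Finset (Fin m)).val := by
  intro h v hh hv
  subst hh hv
  -- basic fixed-point facts
  have fix : ∀ (σ : Equiv.Perm α) (S : Finset α), σ.support = S → ∀ x, x ∉ S → σ x = x := by
    intro σ S hσ x hx
    exact Equiv.Perm.notMem_support.mp (by rw [hσ]; exact hx)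
  have ha₁B : a₁ ∉ B := Finset.disjoint_left.mp hAB ha₁
  have hb₁A : b₁ ∉ A := Finset.disjoint_right.mp hAB hb₁
  have ha₂A : a₂ ∈ A := by
    rw [← hh₁s, ← ha12]
    exact Equiv.Perm.apply_mem_support.mpr (Equiv.Perm.mem_support.mpr (by rw [ha12]; exact hane.symm))
  have hb₂B : b₂ ∈ B := by
    rw [← hh₂s, ← hb12]
    exact Equiv.Perm.apply_mem_support.mpr (Equiv.Perm.mem_support.mpr (by rw [hb12]; exact hbne.symm))
  have ha₂B : a₂ ∉ B := Finset.disjoint_left.mp hAB ha₂A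
  have hb₂A : b₂ ∉ A := Finset.disjoint_right.mp hAB hb₂B
  -- commutation facts
  have com : ∀ σ τ : Equiv.Perm α, σ.support = A → τ.support = B → Commute σ τ := by
    intro σ τ hσ hτ
    exact (Equiv.Perm.disjoint_iff_disjoint_support.mpr (by rw [hσ, hτ]; exact hAB)).commute
  have ch₁h₂ := com h₁ h₂ hh₁s hh₂s
  have ch₁v₂ := com h₁ v₂ hh₁s hv₂s
  have cv₁h₂ := com v₁ h₂ hv₁s hh₂s
  have cv₁v₂ := com v₁ v₂ hv₁s hv₂s
  -- swap transport identities
  have E1 : Equiv.swap a₁ b₁ * (h₂⁻¹ * h₁⁻¹) = (h₂⁻¹ * h₁⁻¹) * Equiv.swap a₂ b₂ := by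
    have key : Equiv.swap a₂ b₂ = (h₁ * h₂) * Equiv.swap a₁ b₁ * (h₁ * h₂)⁻¹ := by
      rw [show a₂ = (h₁ * h₂) a₁ by
            simp [Equiv.Perm.mul_apply, fix h₂ B hh₂s a₁ ha₁B, ha12],
          show b₂ = (h₁ * h₂) b₁ by
            simp [Equiv.Perm.mul_apply, hb12, fix h₁ A hh₁s b₂ hb₂A]]
      exact Equiv.swap_apply_apply (h₁ * h₂) a₁ b₁
    rw [key]
    group
  have E2 : Equiv.swap a₂ b₂ * (v₂⁻¹ * v₁⁻¹) = (v₂⁻¹ * v₁⁻¹) * Equiv.swap a₁ b₁ := by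
    have key : Equiv.swap a₂ b₂ = (v₂⁻¹ * v₁⁻¹) * Equiv.swap a₁ b₁ * (v₂⁻¹ * v₁⁻¹)⁻¹ := by
      rw [show a₂ = (v₂⁻¹ * v₁⁻¹) a₁ by
            simp [Equiv.Perm.mul_apply, hv₁n,
              fix v₂⁻¹ B (by rw [Equiv.Perm.support_inv, hv₂s]) a₂ ha₂B],
          show b₂ = (v₂⁻¹ * v₁⁻¹) b₁ by
            simp [Equiv.Perm.mul_apply, hv₂n,
              fix v₁⁻¹ A (by rw [Equiv.Perm.support_inv, hv₁s]) b₁ hb₁A]]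
      exact Equiv.swap_apply_apply (v₂⁻¹ * v₁⁻¹) a₁ b₁
    rw [key]
    group
  -- the main conjugation identity
  have key : (Equiv.swap a₁ b₁ * h₁ * h₂) * (v₁ * v₂ * Equiv.swap a₁ b₁) * (Equiv.swap a₁ b₁ * h₁ * h₂)⁻¹ * (v₁ * v₂ * Equiv.swap a₁ b₁)⁻¹
      = Equiv.swap a₁ b₁ * ((h₁ * v₁ * h₁⁻¹ * v₁⁻¹) * (h₂ * v₂ * h₂⁻¹ * v₂⁻¹)) * (Equiv.swap a₁ b₁)⁻¹ := by
    have hsinv : (Equiv.swap a₁ b₁)⁻¹ = Equiv.swap a₁ b₁ := Equiv.swap_inv a₁ b₁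
    simp only [mul_inv_rev, hsinv, mul_assoc, Equiv.swap_mul_self_mul]
    -- now both sides are right-associated products
    congr 1
    rw [cv₁h₂.symm.left_comm]
    congr 1
    have shift : ∀ x y z w : Equiv.Perm α, x * (y * z) = (y * z) * w →
        ∀ Y : Equiv.Perm α, x * (y * (z * Y)) = y * (z * (w * Y)) := by
      intro x y z w hx Y
      calc x * (y * (z * Y)) = (x * (y * z)) * Y := by simp [mul_assoc]
        _ = ((y * z) * w) * Y := by rw [hx]
        _ = y * (z * (w * Y)) := by simp [mul_assoc]
    rw [shift _ _ _ _ E1]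
    rw [show Equiv.swap a₂ b₂ * (v₂⁻¹ * v₁⁻¹) = v₂⁻¹ * (v₁⁻¹ * Equiv.swap a₁ b₁) by
          rw [E2, mul_assoc]]
    rw [ch₁h₂.inv_inv.symm.left_comm]
    rw [(ch₁v₂.inv_left).symm.left_comm]
    rw [(ch₁h₂.inv_left).symm.left_comm]
    rw [(cv₁v₂.inv_inv.symm).left_comm]
    rw [(cv₁h₂.inv_inv.symm).left_comm]
    rw [(cv₁v₂.inv_left).symm.left_comm]
    rw [(cv₁h₂.inv_left).symm.left_comm]
  rw [key, Equiv.Perm.cycleType_conj]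
  have hsub : ∀ p q : Equiv.Perm α, p.support ≤ A → q.support ≤ A → (p * q).support ≤ A :=
    fun p q hp hq => le_trans (Equiv.Perm.support_mul_le p q) (sup_le hp hq)
  have hsub' : ∀ p q : Equiv.Perm α, p.support ≤ B → q.support ≤ B → (p * q).support ≤ B :=
    fun p q hp hq => le_trans (Equiv.Perm.support_mul_le p q) (sup_le hp hq)
  have s1 : (h₁ * v₁ * h₁⁻¹ * v₁⁻¹).support ≤ A := by
    apply hsub; apply hsub; apply hsub
    · exact le_of_eq hh₁s
    · exact le_of_eq hv₁s
    · rw [Equiv.Perm.support_inv]; exact le_of_eq hh₁s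
    · rw [Equiv.Perm.support_inv]; exact le_of_eq hv₁s
  have s2 : (h₂ * v₂ * h₂⁻¹ * v₂⁻¹).support ≤ B := by
    apply hsub'; apply hsub'; apply hsub'
    · exact le_of_eq hh₂s
    · exact le_of_eq hv₂s
    · rw [Equiv.Perm.support_inv]; exact le_of_eq hh₂s
    · rw [Equiv.Perm.support_inv]; exact le_of_eq hv₂s
  have hd : (h₁ * v₁ * h₁⁻¹ * v₁⁻¹).Disjoint (h₂ * v₂ * h₂⁻¹ * v₂⁻¹) :=
    Equiv.Perm.disjoint_iff_disjoint_support.mpr (hAB.mono s1 s2)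
  rw [Equiv.Perm.Disjoint.cycleType_mul hd, hc₁, hc₂]
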